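/- For any graph G on n vertices with average degree d = 2e(G)/n, the number of walks of length k in G is at least n·d^k. -/

import Mathlib

open Finset

set_option maxHeartbeats 1000000

namespace BlakleyRoyAux

variable {n : ℕ} (G : SimpleGraph (Fin n)) [DecidableRel G.Adj]

/-- Number of walks of length `k` ending at `v`. -/
def Wn : ℕ → Fin n → ℕ
  | 0, _ => 1
  | k + 1, v => ∑ u ∈ G.neighborFinset v, Wn k u

lemma Wn_succ (k : ℕ) (v : Fin n) :
    Wn G (k + 1) v = ∑ u ∈ G.neighborFinset v, Wn G k u := rfl

lemma Wn_one (v : Fin n) : Wn G 1 v = G.degree v := by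
  rw [Wn_succ]
  simp [Wn, SimpleGraph.card_neighborFinset_eq_degree]

/-- The snoc equivalence. -/
def snocEquiv (α : Type*) (k : ℕ) : ((Fin (k + 1) → α) × α) ≃ (Fin (k + 2) → α) where
  toFun p := Fin.snoc p.1 p.2
  invFun f := (f ∘ Fin.castSucc, f (Fin.last _))
  left_inv p := by
    refine Prod.ext ?_ ?_
    · funext i; simp
    · simp
  right_inv f := by
    funext i
    cases i using Fin.lastCases with
    | last => simp
    | cast j => simp

/-- Key counting lemma, with a weight on the final vertex. -/
lemma sum_walks (k : ℕ) (φ : Fin n → ℕ) :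
    (∑ f : Fin (k + 1) → Fin n,
      (∏ i : Fin k, if G.Adj (f i.castSucc) (f i.succ) then 1 else 0) * φ (f (Fin.last k)))
    = ∑ v, Wn G k v * φ v := by
  induction k generalizing φ with
  | zero =>
    rw [← Fintype.sum_equiv (Equiv.funUnique (Fin 1) (Fin n)).symm
      (fun v : Fin n => Wn G 0 v * φ v)
      (fun f : Fin 1 → Fin n =>
        (∏ i : Fin 0, if G.Adj (f i.castSucc) (f i.succ) then 1 else 0) * φ (f (Fin.last 0)))
      ?_]
    intro v
    have h0 : Fin.last 0 = (default : Fin 1) := rfl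
    simp [Wn, h0, Equiv.funUnique]
  | succ k ih =>
    have hterm : ∀ (g : Fin (k + 1) → Fin n) (x : Fin n),
        (∏ i : Fin (k + 1),
            if G.Adj ((Fin.snoc g x : Fin (k + 2) → Fin n) i.castSucc)
              ((Fin.snoc g x : Fin (k + 2) → Fin n) i.succ) then (1:ℕ) else 0) *
          φ ((Fin.snoc g x : Fin (k + 2) → Fin n) (Fin.last (k + 1)))
        = (∏ i : Fin k, if G.Adj (g i.castSucc) (g i.succ) then 1 else 0) *
            ((if G.Adj (g (Fin.last k)) x then 1 else 0) * φ x) := by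
      intro g x
      rw [Fin.prod_univ_castSucc]
      have h1 : ∀ i : Fin k,
          (if G.Adj ((Fin.snoc g x : Fin (k + 2) → Fin n) (i.castSucc).castSucc)
              ((Fin.snoc g x : Fin (k + 2) → Fin n) (i.castSucc).succ)
            then (1:ℕ) else 0)
          = if G.Adj (g i.castSucc) (g i.succ) then 1 else 0 := by
        intro i
        rw [Fin.succ_castSucc, Fin.snoc_castSucc, Fin.snoc_castSucc]
      have h2 : (if G.Adj ((Fin.snoc g x : Fin (k + 2) → Fin n) (Fin.last k).castSucc)
              ((Fin.snoc g x : Fin (k + 2) → Fin n) (Fin.last k).succ)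
            then (1:ℕ) else 0) = if G.Adj (g (Fin.last k)) x then 1 else 0 := by
        rw [Fin.succ_last, Fin.snoc_castSucc, Fin.snoc_last]
      rw [Finset.prod_congr rfl fun i _ => h1 i, h2, Fin.snoc_last]
      ring
    calc (∑ f : Fin (k + 2) → Fin n,
            (∏ i : Fin (k + 1), if G.Adj (f i.castSucc) (f i.succ) then (1:ℕ) else 0) *
              φ (f (Fin.last (k + 1))))
        = ∑ p : (Fin (k + 1) → Fin n) × Fin n,
            (∏ i : Fin k, if G.Adj (p.1 i.castSucc) (p.1 i.succ) then 1 else 0) *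
              ((if G.Adj (p.1 (Fin.last k)) p.2 then 1 else 0) * φ p.2) := by
          rw [← Fintype.sum_equiv (snocEquiv (Fin n) k)
            (fun p : (Fin (k + 1) → Fin n) × Fin n =>
              (∏ i : Fin k, if G.Adj (p.1 i.castSucc) (p.1 i.succ) then (1:ℕ) else 0) *
                ((if G.Adj (p.1 (Fin.last k)) p.2 then 1 else 0) * φ p.2))
            _ (fun p => (hterm p.1 p.2).symm)]
      _ = ∑ g : Fin (k + 1) → Fin n,
            (∏ i : Fin k, if G.Adj (g i.castSucc) (g i.succ) then 1 else 0) *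
              (∑ x ∈ G.neighborFinset (g (Fin.last k)), φ x) := by
          rw [Fintype.sum_prod_type]
          refine Finset.sum_congr rfl fun g _ => ?_
          dsimp only
          refine (Finset.mul_sum (R := ℕ) Finset.univ (fun y => (if G.Adj (g (Fin.last k)) y then 1 else 0) * φ y) (∏ i : Fin k, if G.Adj (g i.castSucc) (g i.succ) then 1 else 0)).symm.trans ?_
          congr 1
          rw [SimpleGraph.neighborFinset_eq_filter, Finset.sum_filter]
          refine Finset.sum_congr rfl fun x _ => ?_
          split <;> simp
      _ = ∑ v, Wn G k v * ∑ x ∈ G.neighborFinset v, φ x := ih (fun v => ∑ x ∈ G.neighborFinset v, φ x)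
      _ = ∑ v, ∑ x ∈ G.neighborFinset v, Wn G k v * φ x := by
          refine Finset.sum_congr rfl fun v _ => ?_
          rw [Finset.mul_sum]
      _ = ∑ x, ∑ v ∈ G.neighborFinset x, Wn G k v * φ x := by
          refine Finset.sum_comm' ?_
          intro v x
          simp [SimpleGraph.mem_neighborFinset, G.adj_comm]
      _ = ∑ v, Wn G (k + 1) v * φ v := by
          refine Finset.sum_congr rfl fun x _ => ?_
          rw [Wn_succ, Finset.sum_mul]

lemma walkCount_eq (k : ℕ) :
    Nat.card {f : Fin (k + 1) → Fin n //
      ∀ i : Fin k, G.Adj (f i.castSucc) (f i.succ)} = ∑ v, Wn G k v := by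
  rw [Nat.card_eq_fintype_card, Fintype.card_subtype]
  rw [Finset.card_filter]
  have h : ∀ f : Fin (k + 1) → Fin n,
      (if (∀ i : Fin k, G.Adj (f i.castSucc) (f i.succ)) then (1:ℕ) else 0)
      = ∏ i : Fin k, if G.Adj (f i.castSucc) (f i.succ) then 1 else 0 := by
    intro f
    by_cases hf : ∀ i : Fin k, G.Adj (f i.castSucc) (f i.succ)
    · rw [if_pos hf, Finset.prod_eq_one fun i _ => if_pos (hf i)]
    · push_neg at hf
      obtain ⟨i, hi⟩ := hf
      have hz : (∏ i : Fin k, if G.Adj (f i.castSucc) (f i.succ) then (1:ℕ) else 0) = 0 :=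
        Finset.prod_eq_zero (Finset.mem_univ i) (if_neg hi)
      rw [hz, if_neg]
      push_neg
      exact ⟨i, hi⟩
  have h2 := sum_walks G k (fun _ => 1)
  simp only [mul_one] at h2
  rw [Finset.sum_congr rfl fun f _ => h f, h2]

/-- Support: vertices of positive degree. -/
def SS : Finset (Fin n) := Finset.univ.filter fun v => 0 < G.degree v

/-- Total degree (`= 2 e(G)`). -/
def Etot : ℕ := ∑ v, G.degree v

/-- Stationary weights. -/
noncomputable def pin (v : Fin n) : ℝ := (G.degree v : ℝ) / (Etot G : ℝ)

/-- Weighted geometric mean of the degrees. -/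
noncomputable def gm : ℝ := ∏ v ∈ SS G, (G.degree v : ℝ) ^ (pin G v)

lemma mem_SS_of_adj {u v : Fin n} (h : G.Adj u v) : u ∈ SS G := by
  simp only [SS, Finset.mem_filter, Finset.mem_univ, true_and,
    SimpleGraph.degree_pos_iff_exists_adj]
  exact ⟨v, h⟩

lemma deg_pos_of_mem_SS {v : Fin n} (hv : v ∈ SS G) : 0 < G.degree v := by
  simpa [SS] using hv

lemma pin_nonneg (v : Fin n) : 0 ≤ pin G v :=
  div_nonneg (Nat.cast_nonneg _) (Nat.cast_nonneg _)

lemma sum_pin (hE : 0 < Etot G) : ∑ v ∈ SS G, pin G v = 1 := by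
  unfold pin
  rw [← Finset.sum_div]
  have h1 : (∑ v ∈ SS G, (G.degree v : ℝ)) = ∑ v, (G.degree v : ℝ) :=
    Finset.sum_filter_of_ne (fun v _ hne => by
      have : G.degree v ≠ 0 := fun h0 => hne (by simp [h0])
      exact Nat.pos_of_ne_zero this)
  rw [h1, ← Nat.cast_sum]
  exact div_self (by exact_mod_cast hE.ne')

lemma gm_pos : 0 < gm G := by
  refine Finset.prod_pos fun v hv => ?_
  exact Real.rpow_pos_of_pos (by exact_mod_cast deg_pos_of_mem_SS G hv) _

lemma Wn_pos (k : ℕ) : ∀ {v : Fin n}, v ∈ SS G → 0 < Wn G k v := by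
  induction k with
  | zero => intro v _; simp [Wn]
  | succ k ih =>
    intro v hv
    rw [Wn_succ]
    have hne : (G.neighborFinset v).Nonempty := by
      rw [← Finset.card_pos, SimpleGraph.card_neighborFinset_eq_degree]
      exact deg_pos_of_mem_SS G hv
    refine Finset.sum_pos (fun u hu => ih ?_) hne
    rw [SimpleGraph.mem_neighborFinset] at hu
    exact mem_SS_of_adj G hu.symm

lemma Wn_eq_zero (k : ℕ) {v : Fin n} (hv : v ∉ SS G) : Wn G (k + 1) v = 0 := by
  rw [Wn_succ]
  have hd : G.degree v = 0 := by
    by_contra h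
    exact hv (by simp [SS, Nat.pos_of_ne_zero h])
  have : G.neighborFinset v = ∅ := by
    rw [← Finset.card_eq_zero, SimpleGraph.card_neighborFinset_eq_degree]; exact hd
  rw [this, Finset.sum_empty]

/-- The key inductive estimate. -/
lemma key (hE : 0 < Etot G) : ∀ k : ℕ,
    gm G ^ k ≤ ∏ v ∈ SS G, ((Wn G (k + 1) v : ℝ) / (G.degree v : ℝ)) ^ (pin G v) := by
  intro k
  induction k with
  | zero =>
    rw [pow_zero]
    rw [Finset.prod_congr rfl (fun v hv => ?_)]
    · exact (Finset.prod_const_one).ge.trans_eq rfl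
    · rw [Nat.zero_add, Wn_one, div_self
        (by exact_mod_cast (deg_pos_of_mem_SS G hv).ne'), Real.one_rpow]
  | succ k ih =>
    have hgm := gm_pos G
    have hdegS : ∀ v ∈ SS G, ((G.degree v : ℝ)) ≠ 0 := fun v hv => by
      exact_mod_cast (deg_pos_of_mem_SS G hv).ne'
    calc gm G ^ (k + 1) = gm G ^ k * gm G := by rw [pow_succ]
      _ ≤ (∏ v ∈ SS G, ((Wn G (k + 1) v : ℝ) / (G.degree v : ℝ)) ^ (pin G v)) * gm G :=
          mul_le_mul_of_nonneg_right ih hgm.le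
      _ = ∏ v ∈ SS G, (Wn G (k + 1) v : ℝ) ^ (pin G v) := by
          rw [gm, ← Finset.prod_mul_distrib]
          refine Finset.prod_congr rfl fun v hv => ?_
          rw [← Real.mul_rpow (by positivity) (Nat.cast_nonneg _),
            div_mul_cancel₀ _ (hdegS v hv)]
      _ = ∏ u ∈ SS G, ∏ v ∈ G.neighborFinset u,
            (Wn G (k + 1) u : ℝ) ^ ((G.degree v : ℝ)⁻¹ * pin G v) := by
          refine Finset.prod_congr rfl fun u hu => ?_
          rw [← Real.rpow_sum_of_pos (by exact_mod_cast Wn_pos G (k + 1) hu)]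
          congr 1
          have : ∀ v ∈ G.neighborFinset u, (G.degree v : ℝ)⁻¹ * pin G v = (Etot G : ℝ)⁻¹ := by
            intro v hv
            rw [SimpleGraph.mem_neighborFinset] at hv
            have hdv : ((G.degree v : ℝ)) ≠ 0 := hdegS v (mem_SS_of_adj G hv.symm)
            rw [pin, div_eq_mul_inv, ← mul_assoc, inv_mul_cancel₀ hdv, one_mul]
          rw [Finset.sum_congr rfl this, Finset.sum_const, nsmul_eq_mul,
            SimpleGraph.card_neighborFinset_eq_degree, pin, div_eq_mul_inv]
      _ = ∏ v ∈ SS G, ∏ u ∈ G.neighborFinset v,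
            (Wn G (k + 1) u : ℝ) ^ ((G.degree v : ℝ)⁻¹ * pin G v) := by
          refine (Finset.prod_comm' ?_).symm
          intro v u
          simp only [SimpleGraph.mem_neighborFinset]
          constructor
          · rintro ⟨hv, hadj⟩
            exact ⟨hadj.symm, mem_SS_of_adj G hadj.symm⟩
          · rintro ⟨hadj, hu⟩
            exact ⟨mem_SS_of_adj G hadj.symm, hadj.symm⟩
      _ = ∏ v ∈ SS G,
            (∏ u ∈ G.neighborFinset v, (Wn G (k + 1) u : ℝ) ^ ((G.degree v : ℝ)⁻¹))
              ^ (pin G v) := by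
          refine Finset.prod_congr rfl fun v hv => ?_
          rw [← Real.finset_prod_rpow _ _ (fun u _ => by positivity)]
          refine Finset.prod_congr rfl fun u hu => ?_
          rw [← Real.rpow_mul (Nat.cast_nonneg _)]
      _ ≤ ∏ v ∈ SS G, ((Wn G (k + 1 + 1) v : ℝ) / (G.degree v : ℝ)) ^ (pin G v) := by
          refine Finset.prod_le_prod (fun v hv => ?_) (fun v hv => ?_)
          · exact Real.rpow_nonneg
              (Finset.prod_nonneg fun u _ => Real.rpow_nonneg (Nat.cast_nonneg _) _) _
          · refine Real.rpow_le_rpow (Finset.prod_nonneg fun u _ =>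
              Real.rpow_nonneg (Nat.cast_nonneg _) _) ?_ (pin_nonneg G v)
            have hAM := Real.geom_mean_le_arith_mean_weighted (G.neighborFinset v)
              (fun _ => (G.degree v : ℝ)⁻¹) (fun u => (Wn G (k + 1) u : ℝ))
              (fun u _ => by positivity)
              (by rw [Finset.sum_const, nsmul_eq_mul,
                    SimpleGraph.card_neighborFinset_eq_degree,
                    mul_inv_cancel₀ (hdegS v hv)])
              (fun u _ => Nat.cast_nonneg _)
            refine hAM.trans_eq ?_
            rw [Wn_succ G (k + 1), Nat.cast_sum, Finset.sum_div]
            exact Finset.sum_congr rfl fun u _ => (div_eq_inv_mul _ _).symm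

/-- The average degree is at most the weighted geometric mean of the degrees. -/
lemma d_le_gm (hE : 0 < Etot G) (hn : 0 < n) : (Etot G : ℝ) / n ≤ gm G := by
  have hd : (0:ℝ) < (Etot G : ℝ) / n := by positivity
  have hEne : ((Etot G : ℝ)) ≠ 0 := by exact_mod_cast hE.ne'
  have hnne : ((n : ℝ)) ≠ 0 := by exact_mod_cast hn.ne'
  have hAM := Real.geom_mean_le_arith_mean_weighted (SS G) (pin G)
    (fun v => ((Etot G : ℝ) / n) / (G.degree v : ℝ))
    (fun v _ => pin_nonneg G v) (sum_pin G hE)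
    (fun v _ => by positivity)
  have hRHS : (∑ v ∈ SS G, pin G v * (((Etot G : ℝ) / n) / (G.degree v : ℝ))) ≤ 1 := by
    have hcong : ∀ v ∈ SS G, pin G v * (((Etot G : ℝ) / n) / (G.degree v : ℝ))
        = ((n : ℝ))⁻¹ := by
      intro v hv
      have hdv : ((G.degree v : ℝ)) ≠ 0 := by
        exact_mod_cast (deg_pos_of_mem_SS G hv).ne'
      rw [pin]
      field_simp
    rw [Finset.sum_congr rfl hcong, Finset.sum_const, nsmul_eq_mul]
    have hcard : ((SS G).card : ℝ) ≤ n := by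
      have := Finset.card_filter_le Finset.univ (fun v => 0 < G.degree v)
      have h2 : ((SS G).card : ℕ) ≤ n := by simpa [SS] using this
      exact_mod_cast h2
    calc ((SS G).card : ℝ) * ((n:ℝ))⁻¹ ≤ n * ((n:ℝ))⁻¹ :=
          mul_le_mul_of_nonneg_right hcard (by positivity)
      _ = 1 := mul_inv_cancel₀ hnne
  have hLHS : (∏ v ∈ SS G, (((Etot G : ℝ) / n) / (G.degree v : ℝ)) ^ (pin G v))
      = ((Etot G : ℝ) / n) / gm G := by
    rw [Finset.prod_congr rfl (fun v hv =>
      Real.div_rpow hd.le (Nat.cast_nonneg _) (pin G v)), Finset.prod_div_distrib]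
    rw [← Real.rpow_sum_of_pos hd, sum_pin G hE, Real.rpow_one, gm]
  rw [hLHS] at hAM
  exact (div_le_one (gm_pos G)).mp (hAM.trans hRHS)

lemma sum_SS_eq (f : Fin n → ℝ) (hf : ∀ v, ¬ 0 < G.degree v → f v = 0) :
    ∑ v ∈ SS G, f v = ∑ v, f v :=
  Finset.sum_filter_of_ne fun v _ hne => by
    by_contra h
    exact hne (hf v h)

end BlakleyRoyAux

open BlakleyRoyAux

/-- The number of walks of length `k` in a graph `G` on vertex set `Fin n`:
sequences of `k+1` vertices in which consecutive vertices are adjacent. -/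
noncomputable def walkCount (n k : ℕ) (G : SimpleGraph (Fin n)) : ℕ :=
  Nat.card {f : Fin (k + 1) → Fin n //
    ∀ i : Fin k, G.Adj (f i.castSucc) (f i.succ)}

/-- Blakley–Roy inequality: the number of walks of length `k` is at least
`n * d^k`, where `d = 2 e(G) / n` is the average degree. -/
theorem blakley_roy (n k : ℕ) (G : SimpleGraph (Fin n)) :
    (walkCount n k G : ℝ) ≥ n * (2 * (Nat.card G.edgeSet) / n) ^ k := by
  classical
  have hwc : walkCount n k G = ∑ v, Wn G k v := walkCount_eq G k
  have hcast : ((2 : ℝ) * (Nat.card G.edgeSet : ℝ)) = (Etot G : ℝ) := by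
    have h1 : ∑ v, G.degree v = 2 * G.edgeFinset.card := G.sum_degrees_eq_twice_card_edges
    have h2 : Nat.card G.edgeSet = G.edgeFinset.card := by
      rw [Nat.card_eq_fintype_card, SimpleGraph.edgeFinset_card]
    rw [Etot, h1, h2]
    push_cast
    ring
  rcases k with _ | m
  · have h0 : walkCount n 0 G = n := by
      rw [hwc]
      simp [Wn]
    rw [h0, pow_zero, mul_one]
  · by_cases hE : Etot G = 0
    · have hz : ((2:ℝ) * (Nat.card G.edgeSet : ℝ)) = 0 := by
        rw [hcast, hE]; simp
      rw [ge_iff_le, hz, zero_div, zero_pow (Nat.succ_ne_zero m), mul_zero]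
      positivity
    · have hEpos : 0 < Etot G := Nat.pos_of_ne_zero hE
      have hn : 0 < n := by
        rcases Nat.eq_zero_or_pos n with h | h
        · subst h
          exact absurd (by simp [Etot]) hE
        · exact h
      have hnne : ((n:ℝ)) ≠ 0 := by exact_mod_cast hn.ne'
      have hEne : ((Etot G : ℝ)) ≠ 0 := by exact_mod_cast hEpos.ne'
      rw [ge_iff_le, hcast]
      have h1 : (walkCount n (m + 1) G : ℝ) = ∑ v ∈ SS G, (Wn G (m + 1) v : ℝ) := by
        rw [hwc]
        push_cast
        refine (sum_SS_eq G _ fun v h => ?_).symm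
        rw [Wn_eq_zero G m (by simp [SS, h])]
        simp
      have h2 : ∑ v ∈ SS G, (Wn G (m + 1) v : ℝ)
          = (Etot G : ℝ) * ∑ v ∈ SS G, pin G v * ((Wn G (m + 1) v : ℝ) / (G.degree v : ℝ)) := by
        rw [Finset.mul_sum]
        refine Finset.sum_congr rfl fun v hv => ?_
        have hdv : ((G.degree v : ℝ)) ≠ 0 := by
          exact_mod_cast (deg_pos_of_mem_SS G hv).ne'
        rw [pin]
        field_simp
      have hAM := Real.geom_mean_le_arith_mean_weighted (SS G) (pin G)
        (fun v => (Wn G (m + 1) v : ℝ) / (G.degree v : ℝ))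
        (fun v _ => pin_nonneg G v) (sum_pin G hEpos) (fun v _ => by positivity)
      have hkey := key G hEpos m
      have hdg := d_le_gm G hEpos hn
      calc (n:ℝ) * ((Etot G : ℝ) / n) ^ (m + 1)
          = (Etot G : ℝ) * ((Etot G : ℝ) / n) ^ m := by
            rw [pow_succ]
            field_simp
        _ ≤ (Etot G : ℝ) * gm G ^ m :=
            mul_le_mul_of_nonneg_left (pow_le_pow_left₀ (by positivity) hdg m) (by positivity)
        _ ≤ (Etot G : ℝ) * ∏ v ∈ SS G, ((Wn G (m + 1) v : ℝ) / (G.degree v : ℝ)) ^ (pin G v) :=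
            mul_le_mul_of_nonneg_left hkey (by positivity)
        _ ≤ (Etot G : ℝ) * ∑ v ∈ SS G, pin G v * ((Wn G (m + 1) v : ℝ) / (G.degree v : ℝ)) :=
            mul_le_mul_of_nonneg_left hAM (by positivity)
        _ = ∑ v ∈ SS G, (Wn G (m + 1) v : ℝ) := h2.symm
        _ = (walkCount n (m + 1) G : ℝ) := h1.symm
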